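/- Let k ≥ 3 and a > b ≥ 1. If there exists a latin cube of order a + (k−1)b with one subcube of order a and k−1 pairwise disjoint subcubes of order b (all pairwise disjoint), then a ≤ (k−1)b. -/

import Mathlib

def IsLatinCube {n : ℕ} (C : Fin n → Fin n → Fin n → Fin n) : Prop :=
  (∀ i j, Function.Bijective fun k => C i j k) ∧
  (∀ i k, Function.Bijective fun j => C i j k) ∧
  (∀ j k, Function.Bijective fun i => C i j k)

/-- A system of pairwise disjoint subcubes of orders `h 0, …, h (k-1)`
inside a cube `C` of order `n`: for each `i` there are `h i` rows, columns,
files and symbols such that the corresponding subarray is a latin cube on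
those symbols, and distinct subcubes share no layers and no symbols. -/
structure SubcubeSystem {n : ℕ} (C : Fin n → Fin n → Fin n → Fin n)
    (k : ℕ) (h : Fin k → ℕ) where
  rows : (i : Fin k) → Fin (h i) ↪ Fin n
  cols : (i : Fin k) → Fin (h i) ↪ Fin n
  files : (i : Fin k) → Fin (h i) ↪ Fin n
  syms : (i : Fin k) → Fin (h i) ↪ Fin n
  sub : (i : Fin k) → Fin (h i) → Fin (h i) → Fin (h i) → Fin (h i)
  sub_latin : ∀ i, IsLatinCube (sub i)
  entry : ∀ i x y z, C (rows i x) (cols i y) (files i z) = syms i (sub i x y z)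
  rows_disj : ∀ i j, i ≠ j → Disjoint (Set.range ⇑(rows i)) (Set.range ⇑(rows j))
  cols_disj : ∀ i j, i ≠ j → Disjoint (Set.range ⇑(cols i)) (Set.range ⇑(cols j))
  files_disj : ∀ i j, i ≠ j → Disjoint (Set.range ⇑(files i)) (Set.range ⇑(files j))
  syms_disj : ∀ i j, i ≠ j → Disjoint (Set.range ⇑(syms i)) (Set.range ⇑(syms j))

/-- `HasLC k h`: there is a latin cube of order `∑ i, h i` with pairwise
disjoint subcubes of orders `h 0, …, h (k-1)` (a 3-realization). -/
def HasLC (k : ℕ) (h : Fin k → ℕ) : Prop :=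
  ∃ C : Fin (∑ i, h i) → Fin (∑ i, h i) → Fin (∑ i, h i) → Fin (∑ i, h i),
    IsLatinCube C ∧ Nonempty (SubcubeSystem C k h)

/-- if an LC(a b^{k-1}) exists then a ≤ (k-1)b. -/
theorem LC_ab_necessary (k a b : ℕ) (hk : 3 ≤ k) (hb : 1 ≤ b) (hab : b < a)
    (H : HasLC k (fun i => if (i : ℕ) = 0 then a else b)) :
    a ≤ (k - 1) * b := by
  haveI : NeZero k := ⟨by omega⟩
  set h : Fin k → ℕ := fun i => if (i : ℕ) = 0 then a else b with hhdef
  obtain ⟨C, hC, ⟨S⟩⟩ := H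
  set i0 : Fin k := 0 with hi0
  have hh0 : h i0 = a := by simp [hhdef, hi0]
  -- compute the order of the cube
  have hsum : (∑ i, h i) = (k - 1) * b + a := by
    have h1 := Finset.sum_erase_add Finset.univ h (Finset.mem_univ i0)
    have h2 : ∑ x ∈ Finset.univ.erase i0, h x = (k - 1) * b := by
      rw [Finset.sum_congr rfl (fun i hi => ?_), Finset.sum_const,
        Finset.card_erase_of_mem (Finset.mem_univ i0), Finset.card_univ,
        Fintype.card_fin, smul_eq_mul]
      have hi' : i ≠ i0 := (Finset.mem_erase.mp hi).1
      have : (i : ℕ) ≠ 0 := by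
        intro hc
        exact hi' (Fin.ext (by simp [hi0, hc]))
      exact if_neg this
    rw [← h1, h2, hh0]
  have h2b : 2 ≤ (k - 1) * b :=
    le_trans (by omega : 2 ≤ k - 1) (Nat.le_mul_of_pos_right _ hb)
  -- a file outside the subcube-0 files
  have hlt : (Finset.univ.map (S.files i0)).card < Fintype.card (Fin (∑ i, h i)) := by
    rw [Finset.card_map, Finset.card_univ, Fintype.card_fin, Fintype.card_fin, hh0, hsum]
    omega
  obtain ⟨z, hz⟩ : ∃ z, z ∉ Finset.univ.map (S.files i0) := by
    by_contra hcon
    push_neg at hcon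
    rw [Finset.eq_univ_of_forall hcon, Finset.card_univ] at hlt
    exact lt_irrefl _ hlt
  have hzr : ∀ w : Fin (h i0), S.files i0 w ≠ z := by
    intro w hw
    exact hz (Finset.mem_map.mpr ⟨w, Finset.mem_univ _, hw⟩)
  -- a column of subcube 0
  have hpos : 0 < h i0 := by omega
  set y0 : Fin (h i0) := ⟨0, hpos⟩ with hy0
  -- the injection x ↦ C (row x) (col y0) z
  have ginj : Function.Injective (fun x => C (S.rows i0 x) (S.cols i0 y0) z) := by
    intro x x' hxx
    have hxx' : C (S.rows i0 x) (S.cols i0 y0) z = C (S.rows i0 x') (S.cols i0 y0) z := hxx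
    exact (S.rows i0).injective ((hC.2.2 (S.cols i0 y0) z).injective hxx')
  have gnot : ∀ x s : Fin (h i0), C (S.rows i0 x) (S.cols i0 y0) z ≠ S.syms i0 s := by
    intro x s hs
    obtain ⟨z', hz'⟩ := ((S.sub_latin i0).1 x y0).surjective s
    have hz'' : S.sub i0 x y0 z' = s := hz'
    have he := S.entry i0 x y0 z'
    rw [hz''] at he
    have he' : C (S.rows i0 x) (S.cols i0 y0) (S.files i0 z')
        = C (S.rows i0 x) (S.cols i0 y0) z := he.trans hs.symm
    exact hzr z' ((hC.1 (S.rows i0 x) (S.cols i0 y0)).injective he')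
  -- counting
  have hdisj : Disjoint (Finset.univ.map ⟨_, ginj⟩) (Finset.univ.map (S.syms i0)) := by
    rw [Finset.disjoint_left]
    intro v hv hv'
    obtain ⟨x, -, hx⟩ := Finset.mem_map.mp hv
    obtain ⟨s, -, hs⟩ := Finset.mem_map.mp hv'
    simp only [Function.Embedding.coeFn_mk] at hx
    exact gnot x s (hx.trans hs.symm)
  have hcard := Finset.card_le_univ
    ((Finset.univ.map ⟨_, ginj⟩) ∪ (Finset.univ.map (S.syms i0)))
  rw [Finset.card_union_of_disjoint hdisj, Finset.card_map, Finset.card_map] at hcard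
  simp only [Finset.card_univ, Fintype.card_fin] at hcard
  omega
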